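/- arXiv:2311.11369 — 2 statements merged into one kernel-verified Lean document; each statement's English description precedes it below -/
import Mathlib

section
/- Let π_i = {A^j_{(i)} : j = 1,…,2^i} be the partition of [0,1]^d generated by the max-edge partition rule with depth i. Then every cell A^j_{(i)} is an axis-parallel rectangle each of whose side lengths lies in [2^{−⌈i/d⌉}, 2^{−⌊i/d⌋}], and consequently 2^{−1}√d·2^{−i/d} ≤ diam(A^j_{(i)}) ≤ 2√d·2^{−i/d}, where diam(A) = sup_{x,x'∈A}‖x − x'‖₂. -/
open Real

abbrev Cell (d : ℕ) := Fin d → ℝ × ℝ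

/-- A max-edge binary tree of cells over `[0,1]^d`: the root is `[0,1]^d` and each cell is
bisected at the midpoint of one of its longest edges. -/
def IsMaxEdgeTree (d : ℕ) (t : List Bool → Cell d) : Prop :=
  t [] = (fun _ => ((0:ℝ), (1:ℝ))) ∧
  ∀ s : List Bool, ∃ j : Fin d,
    (∀ k, (t s k).2 - (t s k).1 ≤ (t s j).2 - (t s j).1) ∧
    t (s ++ [false]) = Function.update (t s) j ((t s j).1, ((t s j).1 + (t s j).2) / 2) ∧
    t (s ++ [true]) = Function.update (t s) j (((t s j).1 + (t s j).2) / 2, (t s j).2)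

/-- The axis-parallel rectangle in Euclidean space determined by a cell. -/
def cellSetE {d : ℕ} (c : Cell d) : Set (EuclideanSpace ℝ (Fin d)) :=
  {x | ∀ k, x k ∈ Set.Icc (c k).1 (c k).2}

lemma maxEdge_invariant (d : ℕ) (t : List Bool → Cell d) (ht : IsMaxEdgeTree d t)
    (s : List Bool) :
    ∃ f : Fin d → ℕ,
      (∀ k, (t s k).2 - (t s k).1 = (2:ℝ) ^ (-(f k : ℤ))) ∧
      (∑ k, f k = s.length) ∧ (∀ k k', f k ≤ f k' + 1) := by
  induction s using List.reverseRecOn with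
  | nil =>
      refine ⟨fun _ => 0, ?_, by simp, by simp⟩
      intro k; rw [ht.1]; norm_num
  | append_singleton s b ih =>
      obtain ⟨f, hside, hsum, hspread⟩ := ih
      obtain ⟨j, hmax, hf, htr⟩ := ht.2 s
      have hmin : ∀ k, f j ≤ f k := by
        intro k
        have h := hmax k
        rw [hside k, hside j] at h
        have : (-(f k : ℤ)) ≤ (-(f j : ℤ)) :=
          le_of_not_gt fun hc => absurd h (not_le.mpr (zpow_lt_zpow_right₀ one_lt_two hc))
        omega
      refine ⟨Function.update f j (f j + 1), ?_, ?_, ?_⟩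
      · intro k
        have hnewside : (t (s ++ [b]) k).2 - (t (s ++ [b]) k).1 =
            if k = j then ((t s j).2 - (t s j).1) / 2 else (t s k).2 - (t s k).1 := by
          cases b <;> rw [show t (s ++ [_]) = _ from (by first | exact hf | exact htr)] <;>
            by_cases hk : k = j <;> simp [hk, Function.update_apply] <;> ring
        rw [hnewside, Function.update_apply]
        by_cases hk : k = j <;> simp only [hk, if_true, if_false, if_pos rfl]
        · rw [hside j]
          push_cast
          rw [neg_add, zpow_add₀ (two_ne_zero)]
          norm_num
          ring
        · simp [hk, hside k]
      · rw [Finset.sum_update_of_mem (Finset.mem_univ j)]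
        have h2 := Finset.sum_eq_sum_sdiff_singleton_add (Finset.mem_univ j) f
        rw [h2] at hsum
        simp only [List.length_append, List.length_singleton]
        omega
      · intro k k'
        rw [Function.update_apply, Function.update_apply]
        split_ifs with h1 h2 h3
        · omega
        · have := hmin k'; omega
        · have := hspread k j; omega
        · exact hspread k k'

lemma maxEdge_exp_bounds (d : ℕ) (hd : 0 < d) (f : Fin d → ℕ) (i : ℕ)
    (hsum : ∑ k, f k = i) (hspread : ∀ k k', f k ≤ f k' + 1) :
    ∀ k, (⌊(i:ℝ)/(d:ℝ)⌋ ≤ (f k : ℤ)) ∧ ((f k : ℤ) ≤ ⌈(i:ℝ)/(d:ℝ)⌉) := by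
  have hdR : (0:ℝ) < d := by exact_mod_cast hd
  obtain ⟨j0, -, hmin⟩ := Finset.exists_min_image Finset.univ f ⟨⟨0, hd⟩, Finset.mem_univ _⟩
  obtain ⟨e, rfl⟩ : ∃ e, d = e + 1 := ⟨d - 1, by omega⟩
  set m := f j0 with hm
  have hmin' : ∀ k, m ≤ f k := fun k => hmin k (Finset.mem_univ k)
  have hlow : (e + 1) * m ≤ i := by
    have := Finset.card_nsmul_le_sum Finset.univ f m (fun k _ => hmin' k)
    simpa [hsum, mul_comm, smul_eq_mul] using this
  have hsplit := Finset.sum_eq_sum_sdiff_singleton_add (Finset.mem_univ j0) f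
  have hcard : (Finset.univ \ {j0}).card = e := by
    rw [Finset.sdiff_singleton_eq_erase, Finset.card_erase_of_mem (Finset.mem_univ j0)]
    simp
  have hup : i ≤ (e + 1) * m + e := by
    have h2 := Finset.sum_le_card_nsmul (Finset.univ \ {j0}) f (m+1) (fun k _ => hspread k j0)
    rw [hcard, smul_eq_mul] at h2
    rw [hsplit] at hsum
    nlinarith [hsum, h2]
  have hlowR : ((e:ℝ) + 1) * m ≤ i := by exact_mod_cast hlow
  have hupR : (i:ℝ) ≤ ((e:ℝ) + 1) * m + e := by exact_mod_cast hup
  have hdcast : ((e+1:ℕ):ℝ) = (e:ℝ) + 1 := by push_cast; ring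
  have hfloor : ⌊(i:ℝ)/((e+1:ℕ):ℝ)⌋ = (m:ℤ) := by
    rw [hdcast, Int.floor_eq_iff]
    constructor
    · rw [le_div_iff₀ (by positivity)]
      push_cast
      nlinarith [hlowR]
    · rw [div_lt_iff₀ (by positivity)]
      push_cast
      nlinarith [hupR]
  intro k
  refine ⟨by rw [hfloor]; exact_mod_cast hmin' k, ?_⟩
  by_cases hcase : i = (e + 1) * m
  · have hk : f k ≤ m := by
      by_contra hc
      push_neg at hc
      have hsplitk := Finset.sum_eq_sum_sdiff_singleton_add (Finset.mem_univ k) f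
      have hcardk : (Finset.univ \ {k}).card = e := by
        rw [Finset.sdiff_singleton_eq_erase, Finset.card_erase_of_mem (Finset.mem_univ k)]
        simp
      have h3 := Finset.card_nsmul_le_sum (Finset.univ \ {k}) f m (fun k' _ => hmin' k')
      rw [hcardk, smul_eq_mul] at h3
      rw [hsplitk] at hsum
      nlinarith [hsum, h3]
    have hceil : (m:ℤ) ≤ ⌈(i:ℝ)/((e+1:ℕ):ℝ)⌉ := by
      rw [Int.le_ceil_iff]
      rw [hdcast, lt_div_iff₀ (by positivity)]
      push_cast
      nlinarith [hlowR]
    exact le_trans (by exact_mod_cast hk) hceil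
  · have hlt : ((e+1)*m : ℕ) < i := lt_of_le_of_ne hlow (fun h => hcase h.symm)
    have hltR : ((e:ℝ)+1) * m < i := by exact_mod_cast hlt
    have hceil : ((m:ℤ) + 1) ≤ ⌈(i:ℝ)/((e+1:ℕ):ℝ)⌉ := by
      rw [Int.add_one_le_iff, Int.lt_ceil, hdcast, lt_div_iff₀ (by positivity)]
      push_cast
      nlinarith [hltR]
    have hk : f k ≤ m + 1 := hspread k j0
    refine le_trans ?_ hceil
    exact_mod_cast hk

lemma maxEdge_diam_bounds (d : ℕ) (c : Cell d) (lo hi : ℝ) (hlo : 0 ≤ lo) (hhi : 0 ≤ hi)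
    (h : ∀ k, lo ≤ (c k).2 - (c k).1 ∧ (c k).2 - (c k).1 ≤ hi) :
    Real.sqrt d * lo ≤ Metric.diam (cellSetE c) ∧
      Metric.diam (cellSetE c) ≤ Real.sqrt d * hi := by
  set a : EuclideanSpace ℝ (Fin d) := WithLp.toLp 2 (fun k => (c k).1) with ha'
  set b : EuclideanSpace ℝ (Fin d) := WithLp.toLp 2 (fun k => (c k).2) with hb'
  have ha : a ∈ cellSetE c := fun k => ⟨le_refl _, by linarith [(h k).1]⟩
  have hb : b ∈ cellSetE c := fun k => ⟨by linarith [(h k).1], le_refl _⟩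
  have hdist : ∀ x ∈ cellSetE c, ∀ y ∈ cellSetE c, dist x y ≤ Real.sqrt d * hi := by
    intro x hx y hy
    rw [EuclideanSpace.dist_eq]
    have hsum : ∑ k, dist (x k) (y k) ^ 2 ≤ ∑ _k : Fin d, hi ^ 2 := by
      refine Finset.sum_le_sum fun k _ => ?_
      have h1 := hx k; have h2 := hy k; have h3 := h k
      rw [Real.dist_eq]
      rw [sq_abs]
      apply sq_le_sq' <;> simp only [Set.mem_Icc] at h1 h2 <;> nlinarith
    calc Real.sqrt (∑ k, dist (x k) (y k) ^ 2) ≤ Real.sqrt (∑ _k : Fin d, hi ^ 2) :=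
          Real.sqrt_le_sqrt hsum
      _ = Real.sqrt d * hi := by
          rw [Finset.sum_const, Finset.card_univ, Fintype.card_fin, nsmul_eq_mul,
            Real.sqrt_mul (by positivity), Real.sqrt_sq hhi]
  have hbdd : Bornology.IsBounded (cellSetE c) := by
    refine Metric.isBounded_closedBall (x := a) (r := Real.sqrt d * hi) |>.subset ?_
    intro x hx
    exact Metric.mem_closedBall.mpr (hdist x hx a ha)
  constructor
  · have hab : Real.sqrt d * lo ≤ dist a b := by
      rw [EuclideanSpace.dist_eq]
      have hsum : ∑ _k : Fin d, lo ^ 2 ≤ ∑ k, dist (a k) (b k) ^ 2 := by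
        refine Finset.sum_le_sum fun k _ => ?_
        have h3 := h k
        rw [Real.dist_eq, sq_abs]
        nlinarith [h3.1, h3.2, hlo]
      calc Real.sqrt d * lo = Real.sqrt (∑ _k : Fin d, lo ^ 2) := by
            rw [Finset.sum_const, Finset.card_univ, Fintype.card_fin, nsmul_eq_mul,
              Real.sqrt_mul (by positivity), Real.sqrt_sq hlo]
        _ ≤ _ := Real.sqrt_le_sqrt hsum
    exact hab.trans (Metric.dist_le_diam_of_mem hbdd ha hb)
  · exact Metric.diam_le_of_forall_dist_le (by positivity) hdist

/-- Every depth-`i` cell of a max-edge partition of `[0,1]^d` has side lengths in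
`[2^{-⌈i/d⌉}, 2^{-⌊i/d⌋}]`, hence Euclidean diameter between `√d·2^{-i/d}/2` and
`2√d·2^{-i/d}`. -/
theorem stmt_9 (d : ℕ) (hd : 0 < d) (t : List Bool → Cell d) (ht : IsMaxEdgeTree d t)
    (i : ℕ) (s : List Bool) (hs : s.length = i) :
    (∀ k, (2:ℝ) ^ (-⌈(i:ℝ)/(d:ℝ)⌉) ≤ (t s k).2 - (t s k).1 ∧
      (t s k).2 - (t s k).1 ≤ (2:ℝ) ^ (-⌊(i:ℝ)/(d:ℝ)⌋))
    ∧ 2⁻¹ * Real.sqrt d * (2:ℝ) ^ (-(i:ℝ)/d) ≤ Metric.diam (cellSetE (t s))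
    ∧ Metric.diam (cellSetE (t s)) ≤ 2 * Real.sqrt d * (2:ℝ) ^ (-(i:ℝ)/d) := by
  obtain ⟨f, hside, hsum, hspread⟩ := maxEdge_invariant d t ht s
  rw [hs] at hsum
  have hb := maxEdge_exp_bounds d hd f i hsum hspread
  set x : ℝ := (i:ℝ)/(d:ℝ) with hx
  have hsides : ∀ k, (2:ℝ) ^ (-⌈x⌉) ≤ (t s k).2 - (t s k).1 ∧
      (t s k).2 - (t s k).1 ≤ (2:ℝ) ^ (-⌊x⌋) := by
    intro k
    rw [hside k]
    constructor
    · exact zpow_le_zpow_right₀ one_le_two (by have := (hb k).2; omega)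
    · exact zpow_le_zpow_right₀ one_le_two (by have := (hb k).1; omega)
  refine ⟨hsides, ?_, ?_⟩
  · have hkey : 2⁻¹ * (2:ℝ) ^ (-(i:ℝ)/d) ≤ (2:ℝ) ^ (-⌈x⌉) := by
      rw [← Real.rpow_intCast 2 (-⌈x⌉)]
      have h1 : 2⁻¹ * (2:ℝ) ^ (-(i:ℝ)/d) = (2:ℝ) ^ (-(i:ℝ)/d - 1) := by
        rw [Real.rpow_sub two_pos, Real.rpow_one]; ring
      rw [h1]
      apply Real.rpow_le_rpow_of_exponent_le one_le_two
      have := Int.ceil_lt_add_one x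
      push_cast
      rw [neg_div]
      linarith
    have hd1 := (maxEdge_diam_bounds d (t s) ((2:ℝ) ^ (-⌈x⌉)) ((2:ℝ) ^ (-⌊x⌋))
      (by positivity) (by positivity) hsides).1
    nlinarith [Real.sqrt_nonneg (d:ℝ), hkey, Real.rpow_pos_of_pos two_pos (-(i:ℝ)/d)]
  · have hkey : (2:ℝ) ^ (-⌊x⌋) ≤ 2 * (2:ℝ) ^ (-(i:ℝ)/d) := by
      rw [← Real.rpow_intCast 2 (-⌊x⌋)]
      have h1 : 2 * (2:ℝ) ^ (-(i:ℝ)/d) = (2:ℝ) ^ (1 + -(i:ℝ)/d) := by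
        rw [Real.rpow_add two_pos, Real.rpow_one]
      rw [h1]
      apply Real.rpow_le_rpow_of_exponent_le one_le_two
      have := Int.sub_one_lt_floor x
      push_cast
      rw [neg_div]
      linarith
    have hd2 := (maxEdge_diam_bounds d (t s) ((2:ℝ) ^ (-⌈x⌉)) ((2:ℝ) ^ (-⌊x⌋))
      (by positivity) (by positivity) hsides).2
    nlinarith [Real.sqrt_nonneg (d:ℝ), hkey]
end

section
/- Let A, B > 0 and a, b ∈ ℝ. (i) If a ≥ 0 and b ≥ 0 and (a,b) ≠ (0,0), then sup over w ∈ [0,1] of (w·a + (1−w)·b)²/(w²·A + (1−w)²·B) equals a²/A + b²/B; when a > 0 and b > 0 the supremum is attained at w = (B/b)/(A/a + B/b) ∈ (0,1). (ii) If a·b < 0, then sup over w ∈ [0,1] of (w·a + (1−w)·b)²/(w²·A + (1−w)²·B) equals max(a²/A, b²/B), attained at an endpoint w ∈ {0,1}. -/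
open Set

lemma stmt_16_aux (A B : ℝ) (hA : 0 < A) (hB : 0 < B) (a b : ℝ) (ha : 0 < a) (hb : 0 < b) :
    (B / b) / (A / a + B / b) ∈ Ioo (0 : ℝ) 1 ∧
    ((B / b) / (A / a + B / b) * a + (1 - (B / b) / (A / a + B / b)) * b) ^ 2 /
      (((B / b) / (A / a + B / b)) ^ 2 * A + (1 - (B / b) / (A / a + B / b)) ^ 2 * B)
      = a ^ 2 / A + b ^ 2 / B := by
  have hT : 0 < A * b + a * B := by positivity
  have hS : (0:ℝ) < A / a + B / b := by positivity
  have hw : (B / b) / (A / a + B / b) = a * B / (A * b + a * B) := by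
    field_simp
  have h1 : 1 - a * B / (A * b + a * B) = A * b / (A * b + a * B) := by
    field_simp
    ring
  refine ⟨⟨?_, ?_⟩, ?_⟩
  · rw [hw]; positivity
  · rw [hw, div_lt_one hT]; nlinarith [mul_pos hA hb]
  · rw [hw, h1]
    have hne : (a * B) ^ 2 * A + (A * b) ^ 2 * B ≠ 0 := by positivity
    field_simp

/-- Closed-form solution of the weight-optimization problem used to select the
public/private mixing ratio in the pruning procedure. -/
theorem stmt_16 (A B : ℝ) (hA : 0 < A) (hB : 0 < B) (a b : ℝ) :
    (0 ≤ a → 0 ≤ b → ¬(a = 0 ∧ b = 0) →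
      IsGreatest ((fun w : ℝ => (w * a + (1 - w) * b) ^ 2 / (w ^ 2 * A + (1 - w) ^ 2 * B)) ''
          Icc (0 : ℝ) 1) (a ^ 2 / A + b ^ 2 / B)
      ∧ (0 < a → 0 < b →
          (B / b) / (A / a + B / b) ∈ Ioo (0 : ℝ) 1 ∧
          (fun w : ℝ => (w * a + (1 - w) * b) ^ 2 / (w ^ 2 * A + (1 - w) ^ 2 * B))
            ((B / b) / (A / a + B / b)) = a ^ 2 / A + b ^ 2 / B))
    ∧ (a * b < 0 →
        IsGreatest ((fun w : ℝ => (w * a + (1 - w) * b) ^ 2 / (w ^ 2 * A + (1 - w) ^ 2 * B)) ''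
            Icc (0 : ℝ) 1) (max (a ^ 2 / A) (b ^ 2 / B))
        ∧ ∃ w ∈ ({0, 1} : Set ℝ),
            (w * a + (1 - w) * b) ^ 2 / (w ^ 2 * A + (1 - w) ^ 2 * B)
              = max (a ^ 2 / A) (b ^ 2 / B)) := by
  have hD : ∀ w : ℝ, 0 < w ^ 2 * A + (1 - w) ^ 2 * B := by
    intro w
    rcases eq_or_ne w 0 with h | h
    · subst h; norm_num; exact hB
    · have h1 : 0 < w ^ 2 * A := by positivity
      have h2 : 0 ≤ (1 - w) ^ 2 * B := by positivity
      linarith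
  have hf0 : ((0:ℝ) * a + (1 - 0) * b) ^ 2 / ((0:ℝ) ^ 2 * A + (1 - 0) ^ 2 * B) = b ^ 2 / B := by
    norm_num
  have hf1 : ((1:ℝ) * a + (1 - 1) * b) ^ 2 / ((1:ℝ) ^ 2 * A + (1 - 1) ^ 2 * B) = a ^ 2 / A := by
    norm_num
  constructor
  · intro ha hb hab
    have hub : ∀ w : ℝ, (w * a + (1 - w) * b) ^ 2 / (w ^ 2 * A + (1 - w) ^ 2 * B)
        ≤ a ^ 2 / A + b ^ 2 / B := by
      intro w
      rw [div_le_iff₀ (hD w)]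
      have e : a ^ 2 / A + b ^ 2 / B = (a ^ 2 * B + b ^ 2 * A) / (A * B) := by
        field_simp
      rw [e, div_mul_eq_mul_div, le_div_iff₀ (mul_pos hA hB)]
      nlinarith [sq_nonneg (w * A * b - (1 - w) * B * a)]
    have haux : 0 < a → 0 < b →
        (B / b) / (A / a + B / b) ∈ Ioo (0 : ℝ) 1 ∧
        (fun w : ℝ => (w * a + (1 - w) * b) ^ 2 / (w ^ 2 * A + (1 - w) ^ 2 * B))
          ((B / b) / (A / a + B / b)) = a ^ 2 / A + b ^ 2 / B := by
      intro ha' hb'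
      exact stmt_16_aux A B hA hB a b ha' hb'
    refine ⟨⟨?_, ?_⟩, haux⟩
    · rcases eq_or_lt_of_le ha with h | ha'
      · -- a = 0, so b > 0
        have hb' : b ≠ 0 := fun hb0 => hab ⟨h.symm, hb0⟩
        exact ⟨0, by norm_num, by simp only [← h]; norm_num⟩
      · rcases eq_or_lt_of_le hb with h | hb'
        · exact ⟨1, by norm_num, by simp only [← h]; norm_num⟩
        · obtain ⟨hmem, heq⟩ := stmt_16_aux A B hA hB a b ha' hb'
          exact ⟨(B / b) / (A / a + B / b), ⟨le_of_lt hmem.1, le_of_lt hmem.2⟩, heq⟩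
    · rintro y ⟨w, hw, rfl⟩
      exact hub w
  · intro hab
    have hub : ∀ w ∈ Icc (0:ℝ) 1, (w * a + (1 - w) * b) ^ 2 / (w ^ 2 * A + (1 - w) ^ 2 * B)
        ≤ max (a ^ 2 / A) (b ^ 2 / B) := by
      intro w hw
      rw [div_le_iff₀ (hD w)]
      have h1 : a ^ 2 ≤ max (a ^ 2 / A) (b ^ 2 / B) * A :=
        (div_le_iff₀ hA).mp (le_max_left _ _)
      have h2 : b ^ 2 ≤ max (a ^ 2 / A) (b ^ 2 / B) * B :=
        (div_le_iff₀ hB).mp (le_max_right _ _)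
      have h3 : 0 ≤ w * (1 - w) := mul_nonneg hw.1 (by linarith [hw.2])
      nlinarith [mul_le_mul_of_nonneg_left h1 (sq_nonneg w),
        mul_le_mul_of_nonneg_left h2 (sq_nonneg (1 - w)),
        mul_nonpos_of_nonneg_of_nonpos h3 (le_of_lt hab)]
    rcases le_total (a ^ 2 / A) (b ^ 2 / B) with h | h
    · refine ⟨⟨⟨0, by norm_num, by simp only [max_eq_right h]; norm_num⟩, ?_⟩,
        ⟨0, by norm_num, by rw [hf0, max_eq_right h]⟩⟩
      rintro y ⟨w, hw, rfl⟩
      exact hub w hw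
    · refine ⟨⟨⟨1, by norm_num, by simp only [max_eq_left h]; norm_num⟩, ?_⟩,
        ⟨1, by norm_num, by rw [hf1, max_eq_left h]⟩⟩
      rintro y ⟨w, hw, rfl⟩
      exact hub w hw
end
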